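/- For the root system C_n (n ≥ 2), the minimal codimension of a maximal parabolic subalgebra of the split Lie algebra sp(2n,ℝ) equals 2n−1; equivalently r(sp(2n,ℝ)) = 2n−1. -/
import Mathlib

open Finset

section Aux
variable {n : ℕ}

def dvec (a b : Fin n) : Fin n → ℤ :=
  fun i => (if i = a then (1:ℤ) else 0) - (if i = b then 1 else 0)
def pvec (a b : Fin n) : Fin n → ℤ :=
  fun i => (if i = a then (1:ℤ) else 0) + (if i = b then 1 else 0)
def tvec (a : Fin n) : Fin n → ℤ :=
  fun i => if i = a then (2:ℤ) else 0

lemma sum_ind (j a : Fin n) (c : ℤ) :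
    ∑ i ∈ univ.filter (· ≤ j), (if i = a then c else 0) = if a ≤ j then c else 0 := by
  rw [Finset.sum_ite_eq' (univ.filter (· ≤ j)) a (fun _ => c)]
  simp

lemma sum_dvec (j a b : Fin n) :
    ∑ i ∈ univ.filter (· ≤ j), dvec a b i
      = (if a ≤ j then (1:ℤ) else 0) - (if b ≤ j then 1 else 0) := by
  simp only [dvec, Finset.sum_sub_distrib, sum_ind]

lemma sum_pvec (j a b : Fin n) :
    ∑ i ∈ univ.filter (· ≤ j), pvec a b i
      = (if a ≤ j then (1:ℤ) else 0) + (if b ≤ j then 1 else 0) := by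
  simp only [pvec, Finset.sum_add_distrib, sum_ind]

lemma sum_tvec (j a : Fin n) :
    ∑ i ∈ univ.filter (· ≤ j), tvec a i = if a ≤ j then (2:ℤ) else 0 := by
  simp only [tvec, sum_ind]

end Aux
section Aux2
variable {n : ℕ}

lemma tvec_ne_dvec (c x y : Fin n) (hxy : x ≠ y) : tvec c ≠ dvec x y := by
  intro h
  have h1 := congrFun h c
  simp only [tvec, dvec, if_pos rfl] at h1
  split_ifs at h1 <;> omega

lemma tvec_ne_pvec (c x y : Fin n) (hxy : x ≠ y) : tvec c ≠ pvec x y := by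
  intro h
  have h1 := congrFun h c
  simp only [tvec, pvec, if_pos rfl] at h1
  split_ifs at h1 <;> simp_all <;> omega

lemma dvec_ne_pvec (a b x y : Fin n) (hab : a ≠ b) : dvec a b ≠ pvec x y := by
  intro h
  have h1 := congrFun h b
  simp only [dvec, pvec] at h1
  split_ifs at h1 <;> simp_all <;> omega

lemma pvec_left_ne_right (a b c : Fin n) (hab : a < b) (hbc : b < c) :
    pvec a b ≠ pvec b c := by
  intro h
  have h1 := congrFun h a
  simp only [pvec, if_pos rfl] at h1
  have h2 : a ≠ b := hab.ne
  have h3 : a ≠ c := (hab.trans hbc).ne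
  split_ifs at h1 <;> simp_all <;> omega

lemma tvec_inj (a a' : Fin n) (h : tvec a = tvec a') : a = a' := by
  by_contra hne
  have h1 := congrFun h a
  simp [tvec, hne] at h1

lemma dvec_inj (j b b' : Fin n) (hb : j ≠ b) (hb' : j ≠ b') (h : dvec j b = dvec j b') :
    b = b' := by
  by_contra hne
  have h1 := congrFun h b
  simp only [dvec] at h1
  split_ifs at h1 <;> simp_all <;> omega

lemma pvecl_inj (j a a' : Fin n) (ha : a ≠ j) (ha' : a' ≠ j) (h : pvec a j = pvec a' j) :
    a = a' := by
  by_contra hne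
  have h1 := congrFun h a
  simp only [pvec, if_pos rfl] at h1
  split_ifs at h1 <;> simp_all <;> omega

lemma pvecr_inj (j b b' : Fin n) (hb : b ≠ j) (hb' : b' ≠ j) (h : pvec j b = pvec j b') :
    b = b' := by
  by_contra hne
  have h1 := congrFun h b
  simp only [pvec] at h1
  split_ifs at h1 <;> simp_all <;> omega

end Aux2
section Aux3
variable {n : ℕ}

def Fj (j : Fin n) : Finset (Fin n → ℤ) :=
  (((univ.filter (· ≤ j)).image tvec ∪ (univ.filter (j < ·)).image (dvec j)) ∪
    (univ.filter (· < j)).image (fun a => pvec a j)) ∪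
    (univ.filter (j < ·)).image (pvec j)

lemma card_Fj (j : Fin n) : (Fj j).card = 2 * n - 1 := by
  have hd1 : Disjoint ((univ.filter (· ≤ j)).image (tvec (n := n)))
      ((univ.filter (j < ·)).image (dvec j)) := by
    simp only [Finset.disjoint_left, mem_image, mem_filter, mem_univ, true_and]
    rintro v ⟨a, ha, rfl⟩ ⟨b, hb, hvb⟩
    exact tvec_ne_dvec a j b hb.ne hvb.symm
  have hd2 : Disjoint ((univ.filter (· ≤ j)).image (tvec (n := n)) ∪
      (univ.filter (j < ·)).image (dvec j)) ((univ.filter (· < j)).image (fun a => pvec a j)) := by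
    simp only [Finset.disjoint_left, mem_union, mem_image, mem_filter, mem_univ, true_and]
    rintro v (⟨a, ha, rfl⟩ | ⟨b, hb, rfl⟩) ⟨c, hc, hvc⟩
    · exact tvec_ne_pvec a c j hc.ne hvc.symm
    · exact dvec_ne_pvec j b c j hb.ne hvc.symm
  have hd3 : Disjoint (((univ.filter (· ≤ j)).image (tvec (n := n)) ∪
      (univ.filter (j < ·)).image (dvec j)) ∪ (univ.filter (· < j)).image (fun a => pvec a j))
      ((univ.filter (j < ·)).image (pvec j)) := by
    simp only [Finset.disjoint_left, mem_union, mem_image, mem_filter, mem_univ, true_and]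
    rintro v ((⟨a, ha, rfl⟩ | ⟨b, hb, rfl⟩) | ⟨c, hc, rfl⟩) ⟨d, hd, hvd⟩
    · exact tvec_ne_pvec a j d hd.ne hvd.symm
    · exact dvec_ne_pvec j b j d hb.ne hvd.symm
    · exact pvec_left_ne_right c j d hc hd hvd.symm
  rw [Fj, card_union_of_disjoint hd3, card_union_of_disjoint hd2, card_union_of_disjoint hd1]
  have c1 : ((univ.filter (· ≤ j)).image (tvec (n := n))).card = (j : ℕ) + 1 := by
    rw [Finset.card_image_of_injOn (fun a _ b _ h => tvec_inj a b h)]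
    have : univ.filter (· ≤ j) = Finset.Iic j := by ext i; simp
    rw [this, Fin.card_Iic]
  have c2 : ((univ.filter (j < ·)).image (dvec j)).card = n - ((j : ℕ) + 1) := by
    rw [Finset.card_image_of_injOn]
    · have : univ.filter (j < ·) = Finset.Ioi j := by ext i; simp
      rw [this, Fin.card_Ioi]; omega
    · intro a ha b hb h
      simp only [mem_coe, mem_filter, mem_univ, true_and] at ha hb
      exact dvec_inj j a b ha.ne hb.ne h
  have c3 : ((univ.filter (· < j)).image (fun a => pvec a j)).card = (j : ℕ) := by
    rw [Finset.card_image_of_injOn]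
    · have : univ.filter (· < j) = Finset.Iio j := by ext i; simp
      rw [this, Fin.card_Iio]
    · intro a ha b hb h
      simp only [mem_coe, mem_filter, mem_univ, true_and] at ha hb
      exact pvecl_inj j a b ha.ne hb.ne h
  have c4 : ((univ.filter (j < ·)).image (pvec j)).card = n - ((j : ℕ) + 1) := by
    rw [Finset.card_image_of_injOn]
    · have : univ.filter (j < ·) = Finset.Ioi j := by ext i; simp
      rw [this, Fin.card_Ioi]; omega
    · intro a ha b hb h
      simp only [mem_coe, mem_filter, mem_univ, true_and] at ha hb
      exact pvecr_inj j a b ha.ne' hb.ne' h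
  rw [c1, c2, c3, c4]
  have := j.isLt
  omega

end Aux3
section Aux4
variable {n : ℕ}

def Sset (j : Fin n) : Set (Fin n → ℤ) :=
  {v : Fin n → ℤ |
    ((∃ a b : Fin n, a < b ∧
        v = fun i => (if i = a then (1 : ℤ) else 0) - (if i = b then 1 else 0)) ∨
     (∃ a b : Fin n, a < b ∧
        v = fun i => (if i = a then (1 : ℤ) else 0) + (if i = b then 1 else 0)) ∨
     (∃ a : Fin n, v = fun i => if i = a then (2 : ℤ) else 0)) ∧
    (∑ i ∈ Finset.univ.filter (· ≤ j), v i) ≠ 0}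

lemma Fj_subset (j : Fin n) : (↑(Fj j) : Set (Fin n → ℤ)) ⊆ Sset j := by
  intro v hv
  simp only [Fj, coe_union, Set.mem_union, coe_image, Set.mem_image, mem_coe, mem_filter,
    mem_univ, true_and] at hv
  rcases hv with ((⟨a, ha, rfl⟩ | ⟨b, hb, rfl⟩) | ⟨c, hc, rfl⟩) | ⟨d, hd, rfl⟩
  · exact ⟨Or.inr (Or.inr ⟨a, rfl⟩), by rw [sum_tvec, if_pos ha]; omega⟩
  · exact ⟨Or.inl ⟨j, b, hb, rfl⟩, by rw [sum_dvec, if_pos le_rfl, if_neg (not_le.2 hb)]; omega⟩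
  · exact ⟨Or.inr (Or.inl ⟨c, j, hc, rfl⟩),
      by rw [sum_pvec, if_pos hc.le, if_pos le_rfl]; omega⟩
  · exact ⟨Or.inr (Or.inl ⟨j, d, hd, rfl⟩),
      by rw [sum_pvec, if_pos le_rfl, if_neg (not_le.2 hd)]; omega⟩

lemma Sset_finite (j : Fin n) : (Sset j).Finite := by
  have : Sset j ⊆ ↑(((univ ×ˢ univ : Finset (Fin n × Fin n)).image (fun p => dvec p.1 p.2)) ∪
      ((univ ×ˢ univ : Finset (Fin n × Fin n)).image (fun p => pvec p.1 p.2) ∪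
       univ.image tvec)) := by
    rintro v ⟨(⟨a, b, _, rfl⟩ | ⟨a, b, _, rfl⟩ | ⟨a, rfl⟩), -⟩
    · simp only [coe_union, Set.mem_union, coe_image, Set.mem_image, mem_coe]
      exact Or.inl ⟨(a, b), by simp, rfl⟩
    · simp only [coe_union, Set.mem_union, coe_image, Set.mem_image, mem_coe]
      exact Or.inr (Or.inl ⟨(a, b), by simp, rfl⟩)
    · simp only [coe_union, Set.mem_union, coe_image, Set.mem_image, mem_coe]
      exact Or.inr (Or.inr ⟨a, by simp, rfl⟩)
  exact Set.Finite.subset (Finset.finite_toSet _) this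

lemma Sset_zero (hn : 2 ≤ n) :
    Sset (⟨0, by omega⟩ : Fin n) = ↑(Fj (⟨0, by omega⟩ : Fin n)) := by
  set j0 : Fin n := ⟨0, by omega⟩ with hj0
  apply Set.Subset.antisymm _ (Fj_subset j0)
  rintro v ⟨(⟨a, b, hab, rfl⟩ | ⟨a, b, hab, rfl⟩ | ⟨a, rfl⟩), hsum⟩ <;>
    simp only [Fj, coe_union, Set.mem_union, coe_image, Set.mem_image, mem_coe, mem_filter,
      mem_univ, true_and]
  · -- dvec a b
    rw [show (fun i => (if i = a then (1 : ℤ) else 0) - (if i = b then 1 else 0)) = dvec a b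
        from rfl] at hsum ⊢
    rw [sum_dvec] at hsum
    have hb0 : ¬ b ≤ j0 := by
      intro h
      exact absurd (lt_of_lt_of_le hab h) (by simp [hj0, Fin.le_def, Fin.lt_def])
    have ha0 : a ≤ j0 := by
      by_contra h
      simp [h, hb0] at hsum
    have ha0' : a = j0 := le_antisymm ha0 (by simp [hj0, Fin.le_def])
    subst ha0'
    exact Or.inl (Or.inl (Or.inr ⟨b, hab, rfl⟩))
  · rw [show (fun i => (if i = a then (1 : ℤ) else 0) + (if i = b then 1 else 0)) = pvec a b
        from rfl] at hsum ⊢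
    rw [sum_pvec] at hsum
    have hb0 : ¬ b ≤ j0 := by
      intro h
      exact absurd (lt_of_lt_of_le hab h) (by simp [hj0, Fin.le_def, Fin.lt_def])
    have ha0 : a ≤ j0 := by
      by_contra h
      simp [h, hb0] at hsum
    have ha0' : a = j0 := le_antisymm ha0 (by simp [hj0, Fin.le_def])
    subst ha0'
    exact Or.inr ⟨b, hab, rfl⟩
  · rw [show (fun i => if i = a then (2 : ℤ) else 0) = tvec a from rfl] at hsum ⊢
    rw [sum_tvec] at hsum
    have ha0 : a ≤ j0 := by by_contra h; simp [h] at hsum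
    exact Or.inl (Or.inl (Or.inl ⟨a, ha0, rfl⟩))

end Aux4

/-- Minimal resonant codimension of `sp(2n,ℝ)` (root system `C_n`), `n ≥ 2`.

The positive roots of `C_n` in coordinates `e₁,…,e_n` are `e_a − e_b` and `e_a + e_b`
(`a < b`) and `2e_a`; we realize them as integer vectors `v : Fin n → ℤ`.  For the
maximal parabolic subalgebra `q_j` obtained by omitting the `j`-th simple root from the
standard base (`α_i = e_i − e_{i+1}` for `i < n`, `α_n = 2e_n`), a positive root `v` has
a nonzero coefficient on `α_j` exactly when the partial sum `∑_{i ≤ j} v i` is nonzero.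
The resonant codimension `r̄(q_j)` is the number of such positive roots, and the minimum
over `j` — the minimal codimension of a maximal parabolic subalgebra, i.e.
`r(sp(2n,ℝ))` — equals `2n − 1`. -/
theorem stmt7 (n : ℕ) (hn : 2 ≤ n) :
    sInf {m : ℕ | ∃ j : Fin n,
        m = Set.ncard {v : Fin n → ℤ |
          ((∃ a b : Fin n, a < b ∧
              v = fun i => (if i = a then (1 : ℤ) else 0) - (if i = b then 1 else 0)) ∨
           (∃ a b : Fin n, a < b ∧
              v = fun i => (if i = a then (1 : ℤ) else 0) + (if i = b then 1 else 0)) ∨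
           (∃ a : Fin n, v = fun i => if i = a then (2 : ℤ) else 0)) ∧
          (∑ i ∈ Finset.univ.filter (· ≤ j), v i) ≠ 0}} = 2 * n - 1 := by
  have hset : {m : ℕ | ∃ j : Fin n,
      m = Set.ncard {v : Fin n → ℤ |
        ((∃ a b : Fin n, a < b ∧
            v = fun i => (if i = a then (1 : ℤ) else 0) - (if i = b then 1 else 0)) ∨
         (∃ a b : Fin n, a < b ∧
            v = fun i => (if i = a then (1 : ℤ) else 0) + (if i = b then 1 else 0)) ∨
         (∃ a : Fin n, v = fun i => if i = a then (2 : ℤ) else 0)) ∧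
        (∑ i ∈ Finset.univ.filter (· ≤ j), v i) ≠ 0}} =
      {m : ℕ | ∃ j : Fin n, m = (Sset j).ncard} := rfl
  rw [hset]
  have h0 : (2 * n - 1) ∈ {m : ℕ | ∃ j : Fin n, m = (Sset j).ncard} := by
    refine ⟨⟨0, by omega⟩, ?_⟩
    rw [Sset_zero hn, Set.ncard_coe_finset, card_Fj]
  apply le_antisymm (Nat.sInf_le h0)
  refine le_csInf ⟨_, h0⟩ ?_
  rintro m ⟨j, rfl⟩
  calc 2 * n - 1 = (Fj j).card := (card_Fj j).symm
    _ = (↑(Fj j) : Set (Fin n → ℤ)).ncard := (Set.ncard_coe_finset _).symm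
    _ ≤ (Sset j).ncard := Set.ncard_le_ncard (Fj_subset j) (Sset_finite j)
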